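/- Let $D$ be a bipartite digraph with partite sets $V_1$ and $V_2$, and let $C_i$ and $C_j$ be two vertex-disjoint directed cycles in $D$ that cannot be merged into a cycle with vertex set $V(C_i) \cup V(C_j)$. If $\overleftrightarrow{a}(V(C_i), V(C_j)) = \frac{|V(C_i)| \cdot |V(C_j)|}{2}$, then for any $q \in \{1,2\}$ and any $x_i \in V(C_i) \cap V_q$, $x_j \in V(C_j) \cap V_q$, exactly one of the arcs $x_i x_j^+$ and $x_j x_i^+$ belongs to $A(D)$. -/

import Mathlib

open Finset

variable {V : Type*}

/-- Cyclic successor of `x` on the cycle represented by list `c`. -/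
def cycNext [DecidableEq V] (c : List V) (x : V) : V :=
  c.getD ((c.idxOf x + 1) % c.length) x

/-- `c` is a directed cycle of the digraph with arc relation `A`. -/
def IsDicycle [DecidableEq V] (A : V → V → Prop) (c : List V) : Prop :=
  2 ≤ c.length ∧ c.Nodup ∧ ∀ x ∈ c, A x (cycNext c x)

/-- The digraph has a hamiltonian (directed) cycle. -/
def IsHamiltonian [DecidableEq V] (A : V → V → Prop) : Prop :=
  ∃ c : List V, IsDicycle A c ∧ ∀ v, v ∈ c

/-- `p` is a hamiltonian directed path. -/
def IsHamDipath (A : V → V → Prop) (p : List V) : Prop :=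
  p.Nodup ∧ p.Chain' A ∧ ∀ v, v ∈ p

/-- The digraph has a hamiltonian directed path. -/
def IsTraceable (A : V → V → Prop) : Prop := ∃ p, IsHamDipath A p

/-- The digraph has a cycle factor: vertex-disjoint dicycles covering all vertices. -/
def HasCycleFactor [DecidableEq V] (A : V → V → Prop) : Prop :=
  ∃ L : List (List V), (∀ c ∈ L, IsDicycle A c) ∧
    L.Pairwise (fun c d => ∀ x ∈ c, x ∉ d) ∧ ∀ v, ∃ c ∈ L, v ∈ c

/-- `V₁, V₂` form a bipartition of the digraph into independent sets. -/
def IsBipartition [DecidableEq V] [Fintype V] (A : V → V → Prop) (V₁ V₂ : Finset V) : Prop :=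
  Disjoint V₁ V₂ ∧ V₁ ∪ V₂ = Finset.univ ∧
    (∀ x ∈ V₁, ∀ y ∈ V₁, ¬ A x y) ∧ (∀ x ∈ V₂, ∀ y ∈ V₂, ¬ A x y)

/-- total degree (out-degree plus in-degree) of `v`. -/
def deg [Fintype V] (A : V → V → Prop) [DecidableRel A] (v : V) : ℕ :=
  (Finset.univ.filter (fun y => A v y)).card + (Finset.univ.filter (fun y => A y v)).card

/-- number of arcs (in both directions) between `v` and the set `X`. -/
def degIn (A : V → V → Prop) [DecidableRel A] (X : Finset V) (v : V) : ℕ :=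
  (X.filter (fun y => A v y)).card + (X.filter (fun y => A y v)).card

/-- total number of arcs between `X` and `Y`, in both directions. -/
def arcsBetween (A : V → V → Prop) [DecidableRel A] (X Y : Finset V) : ℕ :=
  ((X ×ˢ Y).filter (fun p => A p.1 p.2)).card + ((Y ×ˢ X).filter (fun p => A p.1 p.2)).card

/-- strong connectivity. -/
def IsStrong (A : V → V → Prop) : Prop := ∀ u v, Relation.ReflTransGen A u v

/-- `N⁺(S)`: out-neighbourhood of a set. -/
def outNbrs [Fintype V] [DecidableEq V] (A : V → V → Prop) [DecidableRel A]
    (S : Finset V) : Finset V :=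
  Finset.univ.filter (fun y => ∃ v ∈ S, A v y)

/-- a perfect matching from `X` to `Y` using arcs of the digraph. -/
def HasPerfectMatching (A : V → V → Prop) (X Y : Finset V) : Prop :=
  ∃ f : V → V, Set.InjOn f X ∧ ∀ x ∈ X, f x ∈ Y ∧ A x (f x)

/-- a matching from `V₁` to `V₂`: a set of pairwise independent arcs. -/
def IsMatching (A : V → V → Prop) (V₁ V₂ : Finset V) (M : Finset (V × V)) : Prop :=
  (∀ p ∈ M, p.1 ∈ V₁ ∧ p.2 ∈ V₂ ∧ A p.1 p.2) ∧
  (∀ p ∈ M, ∀ q ∈ M, p ≠ q → p.1 ≠ q.1 ∧ p.2 ≠ q.2)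

/-- the digraph (with arc relation `A`) is a member of the family `𝓗₁`,
with partite sets `S ∪ R` and `U ∪ W`. -/
def IsH1 [DecidableEq V] [Fintype V] (A : V → V → Prop) [DecidableRel A] (a : ℕ)
    (S R U W : Finset V) : Prop :=
  Odd a ∧ 3 ≤ a ∧
  Disjoint S R ∧ Disjoint U W ∧ Disjoint (S ∪ R) (U ∪ W) ∧
  S ∪ R ∪ U ∪ W = Finset.univ ∧
  S.card = (a + 1) / 2 ∧ W.card = (a + 1) / 2 ∧
  U.card = (a - 1) / 2 ∧ R.card = (a - 1) / 2 ∧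
  (∀ x ∈ S ∪ R, ∀ y ∈ S ∪ R, ¬ A x y) ∧
  (∀ x ∈ U ∪ W, ∀ y ∈ U ∪ W, ¬ A x y) ∧
  (∀ r ∈ R, ∀ w ∈ W, A r w ∧ A w r) ∧
  (∀ u ∈ U, ∀ s ∈ S, A u s ∧ A s u) ∧
  (∀ w ∈ W, ∀ s ∈ S, A w s) ∧
  (∀ s ∈ S, ∀ w ∈ W, ¬ A s w) ∧
  (∃ u ∈ U, ∃ r ∈ R, A u r) ∧
  (∀ r ∈ R, (a - 3) / 2 ≤ degIn A U r) ∧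
  (∀ u ∈ U, (a - 3) / 2 ≤ degIn A R u)

/-- the digraph (with arc relation `A`) is the digraph `H₃`,
with partite sets `S ∪ R` and `U ∪ W`. -/
def IsH3 [DecidableEq V] [Fintype V] (A : V → V → Prop) [DecidableRel A] (a : ℕ)
    (S R U W : Finset V) : Prop :=
  Even a ∧ 4 ≤ a ∧
  Disjoint S R ∧ Disjoint U W ∧ Disjoint (S ∪ R) (U ∪ W) ∧
  S ∪ R ∪ U ∪ W = Finset.univ ∧
  S.card = (a + 2) / 2 ∧ W.card = (a + 2) / 2 ∧
  U.card = (a - 2) / 2 ∧ R.card = (a - 2) / 2 ∧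
  (∀ x ∈ S ∪ R, ∀ y ∈ S ∪ R, ¬ A x y) ∧
  (∀ x ∈ U ∪ W, ∀ y ∈ U ∪ W, ¬ A x y) ∧
  (∀ r ∈ R, ∀ y ∈ U ∪ W, A r y ∧ A y r) ∧
  (∀ u ∈ U, ∀ x ∈ S ∪ R, A u x ∧ A x u) ∧
  (∀ w ∈ W, ∀ s ∈ S, A w s) ∧
  (∀ s ∈ S, ∀ w ∈ W, ¬ A s w)

/-- the digraph `H₂` on vertices `Fin 6`, where
`x₁ = 0, x₂ = 1, x₃ = 2, y₁ = 3, y₂ = 4, y₃ = 5`. -/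
def H2Adj : Fin 6 → Fin 6 → Prop := fun u v =>
  (u, v) ∈ ([(0,4),(4,2),(2,5),(5,0),(1,4),(4,1),(1,5),(5,1),(3,0),(0,3),(3,2),(2,3)] :
    List (Fin 6 × Fin 6))

instance : DecidableRel H2Adj := fun u v => by unfold H2Adj; infer_instance

lemma lgetElem_congr (l : List V) {i j : ℕ} (h : i = j) (hi : i < l.length) :
    l[i]'hi = l[j]'(h ▸ hi) := by subst h; rfl

lemma cycNext_getElem [DecidableEq V] {l : List V} (hc : l.Nodup) (i : ℕ) (hi : i < l.length) :
    cycNext l (l[i]'hi) = l[(i+1) % l.length]'(Nat.mod_lt _ (by omega)) := by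
  unfold cycNext
  rw [hc.idxOf_getElem i hi, List.getD_eq_getElem _ _ (Nat.mod_lt _ (by omega))]

lemma cycNext_mem [DecidableEq V] {l : List V} {x : V} (hx : x ∈ l) : cycNext l x ∈ l := by
  have hl : 0 < l.length := List.length_pos_iff.mpr (List.ne_nil_of_mem hx)
  unfold cycNext
  rw [List.getD_eq_getElem _ _ (Nat.mod_lt _ hl)]
  exact List.getElem_mem _

lemma mod_succ_inj {n i j : ℕ} (hi : i < n) (hj : j < n) (h : (i+1) % n = (j+1) % n) :
    i = j := by
  have e : ∀ k, k < n → (k+1) % n = if k+1 = n then 0 else k+1 := by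
    intro k hk
    split
    · simp [*]
    · exact Nat.mod_eq_of_lt (by omega)
  rw [e i hi, e j hj] at h
  split at h <;> split at h <;> omega

lemma cycNext_injOn [DecidableEq V] {l : List V} (hc : l.Nodup) {x y : V}
    (hx : x ∈ l) (hy : y ∈ l) (h : cycNext l x = cycNext l y) : x = y := by
  obtain ⟨i, hi, rfl⟩ := List.getElem_of_mem hx
  obtain ⟨j, hj, rfl⟩ := List.getElem_of_mem hy
  rw [cycNext_getElem hc i hi, cycNext_getElem hc j hj] at h
  have := (List.Nodup.getElem_inj_iff hc).mp h
  exact lgetElem_congr l (mod_succ_inj hi hj this) hi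

lemma cycNext_surjOn [DecidableEq V] {l : List V} (hc : l.Nodup) {v : V} (hv : v ∈ l) :
    ∃ y ∈ l, cycNext l y = v := by
  obtain ⟨j, hj, rfl⟩ := List.getElem_of_mem hv
  have hl : 0 < l.length := by omega
  refine ⟨l[(j + l.length - 1) % l.length]'(Nat.mod_lt _ hl), List.getElem_mem _, ?_⟩
  rw [cycNext_getElem hc]
  refine lgetElem_congr l ?_ _
  rw [Nat.mod_add_mod]
  have h1 : j + l.length - 1 + 1 = j + l.length := by omega
  rw [h1, Nat.add_mod_right, Nat.mod_eq_of_lt hj]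

lemma dicycle_arc [DecidableEq V] {A : V → V → Prop} {l : List V} (h : IsDicycle A l)
    (i : ℕ) (hi : i < l.length) :
    A (l[i]'hi) (l[(i+1) % l.length]'(Nat.mod_lt _ (by omega))) := by
  have := h.2.2 (l[i]'hi) (List.getElem_mem _)
  rwa [cycNext_getElem h.2.1 i hi] at this

lemma isDicycle_of_chain [DecidableEq V] {A : V → V → Prop} {l : List V}
    (h2 : 2 ≤ l.length) (hnd : l.Nodup) (hch : l.Chain' A)
    (hwrap : A (l[l.length - 1]'(by omega)) (l[0]'(by omega))) : IsDicycle A l := by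
  refine ⟨h2, hnd, ?_⟩
  intro x hx
  obtain ⟨i, hi, rfl⟩ := List.getElem_of_mem hx
  rw [cycNext_getElem hnd i hi]
  rcases Nat.lt_or_ge (i+1) l.length with h | h
  · rw [lgetElem_congr l (Nat.mod_eq_of_lt h) _]
    have := List.isChain_iff_getElem.mp hch i (by omega)
    simpa using this
  · have hieq : i + 1 = l.length := by omega
    have hz : (i + 1) % l.length = 0 := by rw [hieq, Nat.mod_self]
    rw [lgetElem_congr l hz _]
    have : i = l.length - 1 := by omega
    subst this
    exact hwrap

lemma chain'_rotate [DecidableEq V] {A : V → V → Prop} {l : List V} (h : IsDicycle A l)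
    (n : ℕ) : (l.rotate n).Chain' A := by
  unfold List.Chain'
  rw [List.isChain_iff_getElem]
  intro i hi
  simp only [List.get_eq_getElem, List.getElem_rotate]
  have hlen : 0 < l.length := by have := h.1; omega
  have := dicycle_arc h ((i + n) % l.length) (Nat.mod_lt _ hlen)
  rw [lgetElem_congr l (i := ((i+n) % l.length + 1) % l.length)
    (j := (i + 1 + n) % l.length) (by rw [Nat.mod_add_mod]; ring_nf) _] at this
  exact this

lemma rotate_getElem_zero [DecidableEq V] {l : List V} (hc : l.Nodup) {x : V} (hx : x ∈ l)
    (h0 : 0 < (l.rotate (l.idxOf x + 1)).length) :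
    (l.rotate (l.idxOf x + 1))[0] = cycNext l x := by
  have hi : l.idxOf x < l.length := List.idxOf_lt_length_iff.mpr hx
  rw [List.getElem_rotate]
  conv_rhs => rw [← List.getElem_idxOf hi]
  rw [cycNext_getElem hc _ hi]
  exact lgetElem_congr l (by rw [Nat.zero_add]) _

lemma rotate_getElem_last [DecidableEq V] {l : List V} (_hc : l.Nodup) {x : V} (hx : x ∈ l)
    (h0 : (l.rotate (l.idxOf x + 1)).length - 1 < (l.rotate (l.idxOf x + 1)).length) :
    (l.rotate (l.idxOf x + 1))[(l.rotate (l.idxOf x + 1)).length - 1] = x := by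
  have hi : l.idxOf x < l.length := List.idxOf_lt_length_iff.mpr hx
  have hlen : 0 < l.length := by omega
  rw [List.getElem_rotate]
  conv_rhs => rw [← List.getElem_idxOf hi]
  refine lgetElem_congr l ?_ _
  simp only [List.length_rotate]
  have h1 : l.length - 1 + (l.idxOf x + 1) = l.idxOf x + l.length := by omega
  rw [h1, Nat.add_mod_right, Nat.mod_eq_of_lt hi]

lemma merge_cycles [DecidableEq V] {A : V → V → Prop} {c₁ c₂ : List V}
    (h₁ : IsDicycle A c₁) (h₂ : IsDicycle A c₂) (hdisj : ∀ x ∈ c₁, x ∉ c₂)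
    {x₁ x₂ : V} (hx₁ : x₁ ∈ c₁) (hx₂ : x₂ ∈ c₂)
    (ha : A x₁ (cycNext c₂ x₂)) (hb : A x₂ (cycNext c₁ x₁)) :
    ∃ l : List V, IsDicycle A l ∧ ∀ v, v ∈ l ↔ v ∈ c₁ ∨ v ∈ c₂ := by
  set r₁ := c₁.rotate (c₁.idxOf x₁ + 1) with hr₁
  set r₂ := c₂.rotate (c₂.idxOf x₂ + 1) with hr₂
  have hl₁ : r₁.length = c₁.length := List.length_rotate _ _
  have hl₂ : r₂.length = c₂.length := List.length_rotate _ _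
  have h2₁ := h₁.1; have h2₂ := h₂.1
  refine ⟨r₂ ++ r₁, ?_, ?_⟩
  · refine isDicycle_of_chain (by simp [hl₁, hl₂]; omega) ?_ ?_ ?_
    · rw [List.nodup_append]
      refine ⟨List.nodup_rotate.mpr h₂.2.1, List.nodup_rotate.mpr h₁.2.1, ?_⟩
      intro a ha2 b ha1 hab
      subst hab
      exact hdisj a (List.mem_rotate.mp ha1) (List.mem_rotate.mp ha2)
    · unfold List.Chain'
      rw [List.isChain_append]
      refine ⟨chain'_rotate h₂ _, chain'_rotate h₁ _, ?_⟩
      intro a hA b hB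
      rw [List.getLast?_eq_getElem?, List.getElem?_eq_getElem (by omega)] at hA
      rw [List.head?_eq_getElem?, List.getElem?_eq_getElem (by omega)] at hB
      simp only [Option.mem_def, Option.some.injEq] at hA hB
      rw [← hA, ← hB, rotate_getElem_last h₂.2.1 hx₂, rotate_getElem_zero h₁.2.1 hx₁]
      exact hb
    · have hlast : (r₂ ++ r₁)[(r₂ ++ r₁).length - 1]'(by simp only [List.length_append, List.length_rotate]; omega) = x₁ := by
        rw [List.getElem_append_right (by simp only [List.length_append]; omega)]
        have : (r₂ ++ r₁).length - 1 - r₂.length = r₁.length - 1 := by simp; omega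
        rw [lgetElem_congr r₁ this]
        exact rotate_getElem_last h₁.2.1 hx₁ (by simp only [List.length_rotate]; omega)
      have hhead : (r₂ ++ r₁)[0]'(by simp only [List.length_append, List.length_rotate]; omega) = cycNext c₂ x₂ := by
        rw [List.getElem_append_left (by omega)]
        exact rotate_getElem_zero h₂.2.1 hx₂ (by simp only [List.length_rotate]; omega)
      rw [hlast, hhead]
      exact ha
  · intro v
    simp only [List.mem_append, hr₁, hr₂, List.mem_rotate]
    tauto
theorem stmt4 {V : Type*} [DecidableEq V] [Fintype V] (A : V → V → Prop) [DecidableRel A]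
    (V₁ V₂ : Finset V) (hbip : IsBipartition A V₁ V₂)
    (c₁ c₂ : List V) (h₁ : IsDicycle A c₁) (h₂ : IsDicycle A c₂)
    (hdisj : ∀ x ∈ c₁, x ∉ c₂)
    (hnomerge : ¬ ∃ c : List V, IsDicycle A c ∧ ∀ v, v ∈ c ↔ v ∈ c₁ ∨ v ∈ c₂)
    (heq : 2 * arcsBetween A c₁.toFinset c₂.toFinset = c₁.length * c₂.length)
    (q : Finset V) (hq : q = V₁ ∨ q = V₂)
    (x₁ x₂ : V) (hx₁ : x₁ ∈ c₁) (hx₁q : x₁ ∈ q) (hx₂ : x₂ ∈ c₂) (hx₂q : x₂ ∈ q) :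
    Xor' (A x₁ (cycNext c₂ x₂)) (A x₂ (cycNext c₁ x₁)) := by
  classical
  obtain ⟨hV12, hVuniv, hA1, hA2⟩ := hbip
  have hmem : ∀ v : V, v ∉ V₁ → v ∈ V₂ := by
    intro v hv
    have hu : v ∈ V₁ ∪ V₂ := hVuniv ▸ Finset.mem_univ v
    rcases Finset.mem_union.mp hu with h | h
    · exact absurd h hv
    · exact h
  have hdiff : ∀ {u v : V}, A u v → (u ∈ V₁ ↔ v ∉ V₁) := by
    intro u v h
    constructor
    · intro hu hv; exact hA1 u hu v hv h
    · intro hv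
      by_contra hu
      exact hA2 u (hmem u hu) v (hmem v hv) h
  have halt : ∀ {c : List V}, IsDicycle A c → ∀ {x}, x ∈ c → (x ∈ V₁ ↔ cycNext c x ∉ V₁) := by
    intro c hdc x hx
    exact hdiff (hdc.2.2 x hx)
  have claimC : ∀ y₁ ∈ c₁, ∀ y₂ ∈ c₂, ¬ (A y₁ (cycNext c₂ y₂) ∧ A y₂ (cycNext c₁ y₁)) := by
    intro y₁ hy₁ y₂ hy₂ hab
    exact hnomerge (merge_cycles h₁ h₂ hdisj hy₁ hy₂ hab.1 hab.2)
  set F₁ := c₁.toFinset with hF₁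
  set F₂ := c₂.toFinset with hF₂
  have hcard₁ : F₁.card = c₁.length := List.toFinset_card_of_nodup h₁.2.1
  have hcard₂ : F₂.card = c₂.length := List.toFinset_card_of_nodup h₂.2.1
  set P := (F₁ ×ˢ F₂).filter (fun p => p.1 ∈ V₁ ↔ p.2 ∈ V₁) with hP
  set Q := (F₁ ×ˢ F₂).filter (fun p => ¬(p.1 ∈ V₁ ↔ p.2 ∈ V₁)) with hQ
  have hPQ : P.card + Q.card = c₁.length * c₂.length := by
    rw [hP, hQ, Finset.card_filter_add_card_filter_not, Finset.card_product,
      hcard₁, hcard₂]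
  have hPQ' : P.card = Q.card := by
    refine Finset.card_bij (fun p _ => (p.1, cycNext c₂ p.2)) ?_ ?_ ?_
    · intro p hp
      rw [hP, Finset.mem_filter, Finset.mem_product] at hp
      obtain ⟨⟨hp1, hp2⟩, hpc⟩ := hp
      rw [hQ, Finset.mem_filter, Finset.mem_product]
      have h2 : p.2 ∈ c₂ := List.mem_toFinset.mp hp2
      refine ⟨⟨hp1, List.mem_toFinset.mpr (cycNext_mem h2)⟩, ?_⟩
      have := halt h₂ h2
      tauto
    · intro p hp p' hp' hpq
      rw [hP, Finset.mem_filter, Finset.mem_product] at hp hp'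
      simp only [Prod.mk.injEq] at hpq
      exact Prod.ext hpq.1
        (cycNext_injOn h₂.2.1 (List.mem_toFinset.mp hp.1.2) (List.mem_toFinset.mp hp'.1.2)
          hpq.2)
    · intro b hb
      rw [hQ, Finset.mem_filter, Finset.mem_product] at hb
      obtain ⟨⟨hb1, hb2⟩, hbc⟩ := hb
      obtain ⟨y, hy, hyv⟩ := cycNext_surjOn h₂.2.1 (List.mem_toFinset.mp hb2)
      refine ⟨(b.1, y), ?_, ?_⟩
      · rw [hP, Finset.mem_filter, Finset.mem_product]
        refine ⟨⟨hb1, List.mem_toFinset.mpr hy⟩, ?_⟩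
        have := halt h₂ hy
        rw [hyv] at this
        tauto
      · show (b.1, cycNext c₂ y) = b
        rw [hyv]
  set E₁₂ := (F₁ ×ˢ F₂).filter (fun p => A p.1 p.2) with hE₁₂
  set E₂₁ := (F₂ ×ˢ F₁).filter (fun p => A p.1 p.2) with hE₂₁
  have harc : arcsBetween A F₁ F₂ = E₁₂.card + E₂₁.card := rfl
  set B₁ := P.filter (fun p => A p.1 (cycNext c₂ p.2)) with hB₁
  set B₂ := P.filter (fun p => A p.2 (cycNext c₁ p.1)) with hB₂
  have hcB₁ : B₁.card = E₁₂.card := by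
    refine Finset.card_bij (fun p _ => (p.1, cycNext c₂ p.2)) ?_ ?_ ?_
    · intro p hp
      rw [hB₁, Finset.mem_filter, hP, Finset.mem_filter, Finset.mem_product] at hp
      obtain ⟨⟨⟨hp1, hp2⟩, _⟩, hA'⟩ := hp
      rw [hE₁₂, Finset.mem_filter, Finset.mem_product]
      exact ⟨⟨hp1, List.mem_toFinset.mpr (cycNext_mem (List.mem_toFinset.mp hp2))⟩, hA'⟩
    · intro p hp p' hp' hpq
      rw [hB₁, Finset.mem_filter, hP, Finset.mem_filter, Finset.mem_product] at hp hp'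
      simp only [Prod.mk.injEq] at hpq
      exact Prod.ext hpq.1
        (cycNext_injOn h₂.2.1 (List.mem_toFinset.mp hp.1.1.2)
          (List.mem_toFinset.mp hp'.1.1.2) hpq.2)
    · intro b hb
      rw [hE₁₂, Finset.mem_filter, Finset.mem_product] at hb
      obtain ⟨⟨hb1, hb2⟩, hA'⟩ := hb
      obtain ⟨y, hy, hyv⟩ := cycNext_surjOn h₂.2.1 (List.mem_toFinset.mp hb2)
      refine ⟨(b.1, y), ?_, ?_⟩
      · rw [hB₁, Finset.mem_filter, hP, Finset.mem_filter, Finset.mem_product]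
        have hcls := hdiff hA'
        have hy2 := halt h₂ hy
        rw [hyv] at hy2
        exact ⟨⟨⟨hb1, List.mem_toFinset.mpr hy⟩, by tauto⟩, by rw [hyv]; exact hA'⟩
      · show (b.1, cycNext c₂ y) = b
        rw [hyv]
  have hcB₂ : B₂.card = E₂₁.card := by
    refine Finset.card_bij (fun p _ => (p.2, cycNext c₁ p.1)) ?_ ?_ ?_
    · intro p hp
      rw [hB₂, Finset.mem_filter, hP, Finset.mem_filter, Finset.mem_product] at hp
      obtain ⟨⟨⟨hp1, hp2⟩, _⟩, hA'⟩ := hp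
      rw [hE₂₁, Finset.mem_filter, Finset.mem_product]
      exact ⟨⟨hp2, List.mem_toFinset.mpr (cycNext_mem (List.mem_toFinset.mp hp1))⟩, hA'⟩
    · intro p hp p' hp' hpq
      rw [hB₂, Finset.mem_filter, hP, Finset.mem_filter, Finset.mem_product] at hp hp'
      simp only [Prod.mk.injEq] at hpq
      exact Prod.ext
        (cycNext_injOn h₁.2.1 (List.mem_toFinset.mp hp.1.1.1)
          (List.mem_toFinset.mp hp'.1.1.1) hpq.2)
        hpq.1
    · intro b hb
      rw [hE₂₁, Finset.mem_filter, Finset.mem_product] at hb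
      obtain ⟨⟨hb1, hb2⟩, hA'⟩ := hb
      obtain ⟨y, hy, hyv⟩ := cycNext_surjOn h₁.2.1 (List.mem_toFinset.mp hb2)
      refine ⟨(y, b.1), ?_, ?_⟩
      · rw [hB₂, Finset.mem_filter, hP, Finset.mem_filter, Finset.mem_product]
        have hcls := hdiff hA'
        have hy2 := halt h₁ hy
        rw [hyv] at hy2
        exact ⟨⟨⟨List.mem_toFinset.mpr hy, hb1⟩, by tauto⟩, by rw [hyv]; exact hA'⟩
      · show (b.1, cycNext c₁ y) = b
        rw [hyv]
  have hdisjB : Disjoint B₁ B₂ := by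
    rw [Finset.disjoint_left]
    intro p hp1 hp2
    rw [hB₁, Finset.mem_filter] at hp1
    rw [hB₂, Finset.mem_filter] at hp2
    have hpP := hp1.1
    rw [hP, Finset.mem_filter, Finset.mem_product] at hpP
    exact claimC p.1 (List.mem_toFinset.mp hpP.1.1) p.2 (List.mem_toFinset.mp hpP.1.2)
      ⟨hp1.2, hp2.2⟩
  have hsub : B₁ ∪ B₂ ⊆ P := by
    intro p hp
    rcases Finset.mem_union.mp hp with h | h
    · exact (Finset.mem_filter.mp h).1
    · exact (Finset.mem_filter.mp h).1
  have hunion : (B₁ ∪ B₂).card = B₁.card + B₂.card := Finset.card_union_of_disjoint hdisjB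
  rw [harc] at heq
  have hle : (B₁ ∪ B₂).card ≤ P.card := Finset.card_le_card hsub
  have hPeq : B₁ ∪ B₂ = P := by
    apply Finset.eq_of_subset_of_card_le hsub
    omega
  have hx₁F : x₁ ∈ F₁ := List.mem_toFinset.mpr hx₁
  have hx₂F : x₂ ∈ F₂ := List.mem_toFinset.mpr hx₂
  have hclass : x₁ ∈ V₁ ↔ x₂ ∈ V₁ := by
    rcases hq with rfl | rfl
    · simp [hx₁q, hx₂q]
    · have e1 : x₁ ∉ V₁ := fun h => (Finset.disjoint_left.mp hV12 h) hx₁q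
      have e2 : x₂ ∉ V₁ := fun h => (Finset.disjoint_left.mp hV12 h) hx₂q
      tauto
  have hpP : (x₁, x₂) ∈ P := by
    rw [hP, Finset.mem_filter, Finset.mem_product]
    exact ⟨⟨hx₁F, hx₂F⟩, hclass⟩
  rw [← hPeq] at hpP
  rcases Finset.mem_union.mp hpP with h | h
  · exact Or.inl ⟨(Finset.mem_filter.mp h).2,
      fun hb => claimC x₁ hx₁ x₂ hx₂ ⟨(Finset.mem_filter.mp h).2, hb⟩⟩
  · exact Or.inr ⟨(Finset.mem_filter.mp h).2,
      fun ha => claimC x₁ hx₁ x₂ hx₂ ⟨ha, (Finset.mem_filter.mp h).2⟩⟩
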